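/- Let $F$ be a field, $n, u$ positive integers with $x^n - u$ irreducible over $\mathbb{Q}$, and define $d_{\min}$ on nonzero polynomials as the minimum $d$-value of their terms, extended to rational functions by $d_{\min}(f_1/f_2) = d_{\min}(f_1) - d_{\min}(f_2)$. If $f \in F[x_0,\dots,x_{n-1}]$ is nonzero and $g \in F(x_0,\dots,x_{n-1}) \setminus F$ satisfies $d_{\min}(g) < 0$, then $d_{\min}(f \circ g) = d_{\max}(f) \cdot d_{\min}(g)$. -/

import Mathlib

open MvPolynomial

noncomputable section
attribute [local instance] Classical.propDecidable

def wdeg (n u : ℕ) (e : Fin n →₀ ℕ) : ℝ :=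
  ∑ i : Fin n, (e i : ℝ) * (u : ℝ) ^ (((i : ℕ) : ℝ) / (n : ℝ))

/-- maximum weighted degree of the terms (junk value `0` for `f = 0`) -/
def dmax {F : Type*} [Field F] (n u : ℕ) (f : MvPolynomial (Fin n) F) : ℝ :=
  if h : f.support.Nonempty then f.support.sup' h (wdeg n u) else 0

/-- minimum weighted degree of the terms (junk value `0` for `f = 0`) -/
def dmin {F : Type*} [Field F] (n u : ℕ) (f : MvPolynomial (Fin n) F) : ℝ :=
  if h : f.support.Nonempty then f.support.inf' h (wdeg n u) else 0

abbrev KK (n : ℕ) (F : Type*) [Field F] := FractionRing (MvPolynomial (Fin n) F)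

def toKK {n : ℕ} {F : Type*} [Field F] : MvPolynomial (Fin n) F →+* KK n F := algebraMap _ _

def IsStar {F : Type*} [Field F] (n u : ℕ) (σ : KK n F →ₐ[F] KK n F) : Prop :=
  ∀ i : Fin n, σ (toKK (X i)) =
    toKK (if h : (i : ℕ) + 1 < n then X (⟨(i : ℕ) + 1, h⟩ : Fin n)
          else X (⟨0, i.pos⟩ : Fin n) ^ u)

def pcomp {F : Type*} [Field F] (n : ℕ) (σ : KK n F →ₐ[F] KK n F) (f g : KK n F) : KK n F :=
  if h : Function.Injective
      ((MvPolynomial.aeval (R := F) (fun i : Fin n => (⇑σ)^[(i : ℕ)] g)).toRingHom :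
        MvPolynomial (Fin n) F →+* KK n F)
  then IsFractionRing.lift h f else 0

namespace Aux
variable {F : Type*} [Field F] {n u : ℕ}

lemma wdeg_add (a b : Fin n →₀ ℕ) : wdeg n u (a + b) = wdeg n u a + wdeg n u b := by
  simp only [wdeg, Finsupp.add_apply, ← Finset.sum_add_distrib]
  congr 1; ext i; push_cast; ring

lemma wdeg_zero : wdeg n u 0 = 0 := by simp [wdeg]

lemma wdeg_single (hu : 0 < u) (j : Fin n) (k : ℕ) :
    wdeg n u (Finsupp.single j k) = (k : ℝ) * (u : ℝ) ^ (((j : ℕ) : ℝ) / (n : ℝ)) := by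
  rw [wdeg, Finset.sum_eq_single j]
  · simp
  · intro i _ hij; simp [Finsupp.single_apply, Ne.symm hij]
  · simp

/-- the real n-th root of u -/
def rr (n u : ℕ) : ℝ := (u : ℝ) ^ ((n : ℝ)⁻¹)

lemma rr_pos (hu : 0 < u) : 0 < rr n u := Real.rpow_pos_of_pos (by exact_mod_cast hu) _

lemma rr_pow (hu : 0 < u) (i : ℕ) : rr n u ^ i = (u : ℝ) ^ ((i : ℝ) / (n : ℝ)) := by
  rw [rr, ← Real.rpow_natCast ((u:ℝ) ^ ((n:ℝ)⁻¹)) i, ← Real.rpow_mul (by positivity)]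
  ring_nf

lemma wdeg_eq_sum_rr (hu : 0 < u) (e : Fin n →₀ ℕ) :
    wdeg n u e = ∑ i : Fin n, (e i : ℝ) * rr n u ^ (i : ℕ) := by
  simp only [wdeg, rr_pow hu]

lemma wdeg_injective (hn : 0 < n) (hu : 0 < u)
    (hirr : Irreducible ((Polynomial.X : Polynomial ℚ) ^ n - Polynomial.C (u : ℚ))) :
    Function.Injective (wdeg n u) := by
  intro a b hab
  set r : ℝ := rr n u with hr
  have hrn : (Polynomial.aeval r) ((Polynomial.X : Polynomial ℚ) ^ n - Polynomial.C (u : ℚ)) = 0 := by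
    have : r ^ n = (u : ℝ) := by
      rw [hr, rr_pow hu n, div_self (by exact_mod_cast hn.ne'), Real.rpow_one]
    simp [this]
  have hmin : ((Polynomial.X : Polynomial ℚ) ^ n - Polynomial.C (u : ℚ)) = minpoly ℚ r :=
    minpoly.eq_of_irreducible_of_monic hirr hrn (Polynomial.monic_X_pow_sub_C _ hn.ne')
  set q : Polynomial ℚ := ∑ i : Fin n, Polynomial.C ((a i : ℚ) - (b i : ℚ)) * Polynomial.X ^ (i : ℕ) with hq
  have haq : (Polynomial.aeval r) q = 0 := by
    have : (Polynomial.aeval r) q = wdeg n u a - wdeg n u b := by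
      rw [hq, map_sum, wdeg_eq_sum_rr hu, wdeg_eq_sum_rr hu, ← Finset.sum_sub_distrib]
      congr 1; ext i
      simp only [map_mul, map_pow, Polynomial.aeval_C, Polynomial.aeval_X]
      push_cast; ring
    rw [this, hab, sub_self]
  have hq0 : q = 0 := by
    by_contra hq0
    have hdvd := minpoly.dvd ℚ r haq
    rw [← hmin] at hdvd
    have h1 : n ≤ q.natDegree := by
      have := Polynomial.natDegree_le_of_dvd hdvd hq0
      rwa [Polynomial.natDegree_X_pow_sub_C] at this
    have h2 : q.natDegree < n := by
      rw [hq]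
      apply Nat.lt_of_le_of_lt (Polynomial.natDegree_sum_le _ _)
      rw [Finset.fold_max_lt]
      constructor
      · exact hn
      · intro i _
        exact Nat.lt_of_le_of_lt (Polynomial.natDegree_C_mul_X_pow_le _ _) i.2
    omega
  ext j
  have : q.coeff (j : ℕ) = (a j : ℚ) - (b j : ℚ) := by
    rw [hq, Polynomial.finset_sum_coeff, Finset.sum_eq_single j]
    · rw [Polynomial.coeff_C_mul, Polynomial.coeff_X_pow, if_pos rfl, mul_one]
    · intro i _ hij
      rw [Polynomial.coeff_C_mul, Polynomial.coeff_X_pow,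
        if_neg (by simpa [Fin.ext_iff, eq_comm] using hij)]
      ring
    · simp
  rw [hq0] at this
  simp only [Polynomial.coeff_zero] at this
  have := sub_eq_zero.mp this.symm
  exact_mod_cast this


lemma dmin_le {f : MvPolynomial (Fin n) F} {e : Fin n →₀ ℕ} (he : e ∈ f.support) :
    dmin n u f ≤ wdeg n u e := by
  rw [dmin, dif_pos ⟨e, he⟩]; exact Finset.inf'_le _ he

lemma le_dmax {f : MvPolynomial (Fin n) F} {e : Fin n →₀ ℕ} (he : e ∈ f.support) :
    wdeg n u e ≤ dmax n u f := by
  rw [dmax, dif_pos ⟨e, he⟩]; exact Finset.le_sup' _ he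

lemma exists_dmin {f : MvPolynomial (Fin n) F} (hf : f ≠ 0) :
    ∃ e ∈ f.support, dmin n u f = wdeg n u e := by
  have h : f.support.Nonempty := support_nonempty.mpr hf
  obtain ⟨e, he, h2⟩ := Finset.exists_mem_eq_inf' h (wdeg n u)
  exact ⟨e, he, by rw [dmin, dif_pos h]; exact h2⟩

lemma exists_dmax {f : MvPolynomial (Fin n) F} (hf : f ≠ 0) :
    ∃ e ∈ f.support, dmax n u f = wdeg n u e := by
  have h : f.support.Nonempty := support_nonempty.mpr hf
  obtain ⟨e, he, h2⟩ := Finset.exists_mem_eq_sup' h (wdeg n u)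
  exact ⟨e, he, by rw [dmax, dif_pos h]; exact h2⟩

lemma dmin_C {c : F} (hc : c ≠ 0) : dmin n u (C c) = 0 := by
  have : (C c : MvPolynomial (Fin n) F).support = {0} := by
    rw [C_apply, support_monomial, if_neg hc]
  rw [dmin, dif_pos (by rw [this]; exact ⟨0, Finset.mem_singleton_self 0⟩)]
  simp [this, wdeg_zero]

set_option maxHeartbeats 1000000 in
lemma dmin_mul (hinj : Function.Injective (wdeg n u))
    {f g : MvPolynomial (Fin n) F} (hf : f ≠ 0) (hg : g ≠ 0) :
    dmin n u (f * g) = dmin n u f + dmin n u g := by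
  obtain ⟨a, ha, hda⟩ := exists_dmin (u := u) hf
  obtain ⟨b, hb, hdb⟩ := exists_dmin (u := u) hg
  have hab : (a + b) ∈ (f * g).support := by
    rw [mem_support_iff, coeff_mul]
    rw [Finset.sum_eq_single_of_mem (a, b) (Finset.HasAntidiagonal.mem_antidiagonal.mpr rfl)]
    · exact mul_ne_zero (mem_support_iff.mp ha) (mem_support_iff.mp hb)
    · rintro ⟨x, y⟩ hxy hne
      rw [Finset.HasAntidiagonal.mem_antidiagonal] at hxy
      by_cases hx : x ∈ f.support
      · by_cases hy : y ∈ g.support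
        · exfalso
          have h1 : wdeg n u a ≤ wdeg n u x := hda ▸ dmin_le hx
          have h2 : wdeg n u b ≤ wdeg n u y := hdb ▸ dmin_le hy
          have h3 : wdeg n u x + wdeg n u y = wdeg n u a + wdeg n u b := by
            rw [← wdeg_add, ← wdeg_add, hxy]
          have hxa : x = a := hinj (le_antisymm (by linarith) h1)
          have hyb : y = b := by
            apply hinj
            have : wdeg n u y = wdeg n u b := by
              rw [hxa] at h3; linarith
            exact this
          exact hne (Prod.ext hxa hyb)
        · rw [notMem_support_iff.mp hy, mul_zero]
      · rw [notMem_support_iff.mp hx, zero_mul]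
  apply le_antisymm
  · calc dmin n u (f * g) ≤ wdeg n u (a + b) := dmin_le hab
    _ = _ := by rw [wdeg_add, hda, hdb]
  · have hfg : f * g ≠ 0 := mul_ne_zero hf hg
    obtain ⟨c, hc, hdc⟩ := exists_dmin (u := u) hfg
    rw [hdc]
    obtain ⟨x, hx, y, hy, hxy⟩ := Finset.mem_add.mp (support_mul f g hc)
    rw [← hxy, wdeg_add]
    exact add_le_add (dmin_le hx) (dmin_le hy)

/-- value group -/
abbrev Γr := WithZero (Multiplicative ℝ)

def wfunc (n u : ℕ) {F : Type*} [Field F] (f : MvPolynomial (Fin n) F) : Γr :=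
  if f = 0 then 0 else ((Multiplicative.ofAdd (-dmin n u f) : Multiplicative ℝ) : Γr)

set_option maxHeartbeats 1000000 in
/-- the valuation on polynomials -/
def wval (n u : ℕ) (F : Type*) [Field F] (hinj : Function.Injective (wdeg n u)) :
    Valuation (MvPolynomial (Fin n) F) Γr where
  toFun := wfunc n u
  map_zero' := if_pos rfl
  map_one' := by
    show wfunc n u 1 = 1
    rw [wfunc, if_neg one_ne_zero]
    have : dmin n u (1 : MvPolynomial (Fin n) F) = 0 := by
      simpa using dmin_C (n := n) (u := u) (one_ne_zero (α := F))
    simp [this]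
  map_mul' := fun f g => by
    show wfunc n u _ = wfunc n u f * wfunc n u g
    simp only [wfunc]
    by_cases hf : f = 0
    · simp [hf]
    by_cases hg : g = 0
    · simp [hg]
    rw [if_neg hf, if_neg hg, if_neg (mul_ne_zero hf hg), dmin_mul hinj hf hg,
      ← WithZero.coe_mul, ← ofAdd_add]
    ring_nf
  map_add_le_max' := fun f g => by
    show wfunc n u _ ≤ max (wfunc n u f) (wfunc n u g)
    simp only [wfunc]
    by_cases hfg : f + g = 0
    · simp [hfg]
    by_cases hf : f = 0
    · simp [hf]
    by_cases hg : g = 0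
    · simp [hg]
    rw [if_neg hfg, if_neg hf, if_neg hg]
    rw [le_max_iff]
    obtain ⟨e, he, hde⟩ := exists_dmin (u := u) hfg
    have := MvPolynomial.support_add (p := f) (q := g) he
    rcases Finset.mem_union.mp this with h | h
    · left
      rw [WithZero.coe_le_coe, Multiplicative.ofAdd_le, neg_le_neg_iff]
      exact hde ▸ dmin_le h
    · right
      rw [WithZero.coe_le_coe, Multiplicative.ofAdd_le, neg_le_neg_iff]
      exact hde ▸ dmin_le h

lemma wval_apply (hinj : Function.Injective (wdeg n u)) {f : MvPolynomial (Fin n) F} (hf : f ≠ 0) :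
    wval n u F hinj f = ((Multiplicative.ofAdd (-dmin n u f) : Multiplicative ℝ) : Γr) := by
  show wfunc n u f = _
  rw [wfunc, if_neg hf]

lemma wval_ne_zero_iff (hinj : Function.Injective (wdeg n u)) {f : MvPolynomial (Fin n) F} :
    wval n u F hinj f ≠ 0 ↔ f ≠ 0 := by
  constructor
  · intro h hf; exact h (by subst hf; exact map_zero _)
  · intro hf; rw [wval_apply hinj hf]; exact WithZero.coe_ne_zero


/-- the valuation extended to the fraction field -/
def vK (n u : ℕ) (F : Type*) [Field F] (hinj : Function.Injective (wdeg n u)) :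
    Valuation (KK n F) Γr :=
  (wval n u F hinj).extendToLocalization
    (S := nonZeroDivisors (MvPolynomial (Fin n) F))
    (fun x hx => by
      show x ∉ (wval n u F hinj).supp
      rw [Valuation.mem_supp_iff]
      exact (wval_ne_zero_iff hinj).mpr (mem_nonZeroDivisors_iff_ne_zero.mp hx))
    (KK n F)

lemma vK_toKK (hinj : Function.Injective (wdeg n u)) (p : MvPolynomial (Fin n) F) :
    vK n u F hinj (toKK p) = wval n u F hinj p :=
  Valuation.extendToLocalization_apply_map_apply _ _ _ _

lemma vK_toKK' (hinj : Function.Injective (wdeg n u)) {p : MvPolynomial (Fin n) F} (hp : p ≠ 0) :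
    vK n u F hinj (toKK p) =
      ((Multiplicative.ofAdd (-dmin n u p) : Multiplicative ℝ) : Γr) := by
  rw [vK_toKK, wval_apply hinj hp]

lemma coe_ofAdd_prod {ι : Type*} (s : Finset ι) (f : ι → ℝ) :
    ((Multiplicative.ofAdd (∑ i ∈ s, f i) : Multiplicative ℝ) : Γr) =
      ∏ i ∈ s, ((Multiplicative.ofAdd (f i) : Multiplicative ℝ) : Γr) := by
  rw [ofAdd_sum]
  exact map_prod WithZero.coeMonoidHom _ s

lemma vK_ne_zero_iff (hinj : Function.Injective (wdeg n u)) {x : KK n F} :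
    vK n u F hinj x ≠ 0 ↔ x ≠ 0 := Valuation.ne_zero_iff _

set_option maxHeartbeats 1000000 in
/-- key lemma: valuation of `aeval pts p` -/
lemma vK_aeval (hinj : Function.Injective (wdeg n u)) (pts : Fin n → KK n F) (t : Fin n → ℝ)
    (hpts : ∀ i, vK n u F hinj (pts i) = ((Multiplicative.ofAdd (t i) : Multiplicative ℝ) : Γr))
    (ht : Function.Injective fun e : Fin n →₀ ℕ => ∑ i : Fin n, (e i : ℝ) * t i)
    {p : MvPolynomial (Fin n) F} (hp : p ≠ 0) :
    vK n u F hinj (aeval pts p) =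
      ((Multiplicative.ofAdd (p.support.sup' (support_nonempty.mpr hp)
        (fun e => ∑ i : Fin n, (e i : ℝ) * t i)) : Multiplicative ℝ) : Γr) := by
  have hterm : ∀ d ∈ p.support,
      vK n u F hinj (algebraMap F (KK n F) (coeff d p) * ∏ i ∈ d.support, pts i ^ d i) =
        ((Multiplicative.ofAdd (∑ i : Fin n, (d i : ℝ) * t i) : Multiplicative ℝ) : Γr) := by
    intro d hd
    rw [map_mul]
    have hc : vK n u F hinj (algebraMap F (KK n F) (coeff d p)) = 1 := by
      rw [IsScalarTower.algebraMap_apply F (MvPolynomial (Fin n) F) (KK n F)]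
      have : (algebraMap (MvPolynomial (Fin n) F) (KK n F)) (algebraMap F _ (coeff d p)) =
          toKK (C (coeff d p)) := rfl
      rw [this, vK_toKK' hinj (by simpa using mem_support_iff.mp hd),
        dmin_C (mem_support_iff.mp hd)]
      simp
    rw [hc, one_mul, map_prod]
    have : ∀ i ∈ d.support, vK n u F hinj (pts i ^ d i) =
        ((Multiplicative.ofAdd ((d i : ℝ) * t i) : Multiplicative ℝ) : Γr) := by
      intro i _
      rw [map_pow, hpts i, ← WithZero.coe_pow, ← ofAdd_nsmul]
      norm_num
    rw [Finset.prod_congr rfl this, ← coe_ofAdd_prod]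
    exact congrArg (fun z : ℝ => ((Multiplicative.ofAdd z : Multiplicative ℝ) : Γr))
      (Finset.sum_subset (Finset.subset_univ _) (fun i _ hi => by
        rw [Finsupp.notMem_support_iff.mp hi]; push_cast; ring))
  obtain ⟨b, hb, hbv⟩ := Finset.exists_mem_eq_sup' (support_nonempty.mpr hp)
    (fun e => ∑ i : Fin n, (e i : ℝ) * t i)
  rw [aeval_def, eval₂_eq]
  rw [Valuation.map_sum_eq_of_lt _ hb (f := fun d =>
      algebraMap F (KK n F) (coeff d p) * ∏ i ∈ d.support, pts i ^ d i)]
  · rw [hterm b hb, hbv]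
  · intro d hd
    simp only [Finset.mem_sdiff, Finset.mem_singleton] at hd
    obtain ⟨hd1, hd2⟩ := hd
    rw [hterm b hb, hterm d hd1, WithZero.coe_lt_coe, Multiplicative.ofAdd_lt]
    have hle : (∑ i : Fin n, (d i : ℝ) * t i) ≤ ∑ i : Fin n, (b i : ℝ) * t i := by
      rw [← hbv]
      exact Finset.le_sup' (fun e : Fin n →₀ ℕ => ∑ i : Fin n, (e i : ℝ) * t i) hd1
    cases hle.lt_or_eq with
    | inl h => exact h
    | inr h => exact absurd (ht h) hd2

lemma sup'_eq_of_mem {ι : Type*} {s : Finset ι} (H : s.Nonempty) (f : ι → ℝ) {b : ι}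
    (hb : b ∈ s) (hmax : ∀ e ∈ s, f e ≤ f b) : s.sup' H f = f b :=
  le_antisymm (Finset.sup'_le _ _ hmax) (Finset.le_sup' f hb)

/-- the polynomial "star" substitution -/
def nxt (n u : ℕ) (F : Type*) [Field F] (i : Fin n) : MvPolynomial (Fin n) F :=
  if h : (i : ℕ) + 1 < n then X (⟨(i : ℕ) + 1, h⟩ : Fin n)
  else X (⟨0, i.pos⟩ : Fin n) ^ u

lemma dmin_nxt (hu : 0 < u) (i : Fin n) :
    nxt n u F i ≠ 0 ∧ dmin n u (nxt n u F i) = rr n u ^ ((i : ℕ) + 1) := by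
  rw [nxt]
  split_ifs with h
  · refine ⟨X_ne_zero _, ?_⟩
    have hs : (X (⟨(i : ℕ) + 1, h⟩ : Fin n) : MvPolynomial (Fin n) F).support
        = {Finsupp.single (⟨(i : ℕ) + 1, h⟩ : Fin n) 1} := support_X
    rw [dmin, dif_pos (by rw [hs]; exact Finset.singleton_nonempty _)]
    rw [Finset.inf'_congr _ rfl (fun _ _ => rfl)]
    simp only [hs, Finset.inf'_singleton]
    rw [wdeg_single hu, rr_pow hu]
    push_cast
    simp
  · have hne : (X (⟨0, i.pos⟩ : Fin n) ^ u : MvPolynomial (Fin n) F) ≠ 0 :=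
      pow_ne_zero _ (X_ne_zero _)
    refine ⟨hne, ?_⟩
    have hs : (X (⟨0, i.pos⟩ : Fin n) ^ u : MvPolynomial (Fin n) F).support
        = {Finsupp.single (⟨0, i.pos⟩ : Fin n) u} := support_X_pow _ _
    rw [dmin, dif_pos (by rw [hs]; exact Finset.singleton_nonempty _)]
    simp only [hs, Finset.inf'_singleton]
    rw [wdeg_single hu]
    have hin : (i : ℕ) + 1 = n := by omega
    rw [hin, rr_pow hu n, div_self (by exact_mod_cast (i.pos).ne'), Real.rpow_one]
    norm_num

lemma sigma_toKK (σ : KK n F →ₐ[F] KK n F) (hσ : IsStar n u σ) (p : MvPolynomial (Fin n) F) :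
    σ (toKK p) = toKK (aeval (nxt n u F) p) := by
  have key : (σ.comp (IsScalarTower.toAlgHom F (MvPolynomial (Fin n) F) (KK n F))) =
      (IsScalarTower.toAlgHom F (MvPolynomial (Fin n) F) (KK n F)).comp (aeval (nxt n u F)) := by
    apply MvPolynomial.algHom_ext
    intro i
    simp only [AlgHom.comp_apply, IsScalarTower.toAlgHom_apply, aeval_X]
    exact hσ i
  exact AlgHom.congr_fun key p

lemma dmin_tau (hinj : Function.Injective (wdeg n u)) (hu : 0 < u)
    {p : MvPolynomial (Fin n) F} (hp : p ≠ 0) :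
    aeval (nxt n u F) p ≠ 0 ∧ dmin n u (aeval (nxt n u F) p) = rr n u * dmin n u p := by
  have hcomm : toKK (aeval (nxt n u F) p) = aeval (fun i => toKK (nxt n u F i)) p := by
    have : (IsScalarTower.toAlgHom F (MvPolynomial (Fin n) F) (KK n F)).comp
        (aeval (nxt n u F)) = aeval (fun i => toKK (nxt n u F i)) := by
      apply MvPolynomial.algHom_ext
      intro i
      simp only [AlgHom.comp_apply, IsScalarTower.toAlgHom_apply, aeval_X]
      rfl
    exact AlgHom.congr_fun this p
  set t : Fin n → ℝ := fun i => -(rr n u ^ ((i : ℕ) + 1)) with htdef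
  have hsum : ∀ e : Fin n →₀ ℕ, (∑ i : Fin n, (e i : ℝ) * t i) = -(rr n u * wdeg n u e) := by
    intro e
    rw [wdeg_eq_sum_rr hu, Finset.mul_sum, ← Finset.sum_neg_distrib]
    apply Finset.sum_congr rfl
    intro i _
    rw [htdef]
    ring
  have hpts : ∀ i, vK n u F hinj (toKK (nxt n u F i)) =
      ((Multiplicative.ofAdd (t i) : Multiplicative ℝ) : Γr) := by
    intro i
    obtain ⟨hne, hdm⟩ := dmin_nxt (F := F) hu i
    rw [vK_toKK' hinj hne, hdm]
  have ht : Function.Injective fun e : Fin n →₀ ℕ => ∑ i : Fin n, (e i : ℝ) * t i := by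
    intro a b hab
    simp only [hsum] at hab
    apply hinj
    have hr0 : rr n u ≠ 0 := (rr_pos hu).ne'
    exact mul_left_cancel₀ hr0 (neg_injective hab)
  have hval := vK_aeval hinj (fun i => toKK (nxt n u F i)) t hpts ht hp
  rw [← hcomm] at hval
  obtain ⟨b, hb, hdb⟩ := exists_dmin (u := u) hp
  have hsup : (p.support.sup' (support_nonempty.mpr hp)
      (fun e => ∑ i : Fin n, (e i : ℝ) * t i)) = -(rr n u * dmin n u p) := by
    rw [sup'_eq_of_mem _ _ hb]
    · rw [hsum, hdb]
    · intro e he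
      rw [hsum, hsum]
      have h1 : wdeg n u b ≤ wdeg n u e := hdb ▸ dmin_le he
      have h2 : (0:ℝ) < rr n u := rr_pos hu
      nlinarith
  rw [hsup] at hval
  have hne : aeval (nxt n u F) p ≠ 0 := by
    intro h0
    rw [h0] at hval
    simp only [map_zero] at hval
    exact WithZero.zero_ne_coe hval
  refine ⟨hne, ?_⟩
  rw [vK_toKK' hinj hne] at hval
  have := WithZero.coe_inj.mp hval
  have := Multiplicative.ofAdd.injective this
  linarith [this]

lemma iter_facts (hinj : Function.Injective (wdeg n u)) (hu : 0 < u)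
    {p : MvPolynomial (Fin n) F} (hp : p ≠ 0) (i : ℕ) :
    (fun q => aeval (nxt n u F) q)^[i] p ≠ 0 ∧
      dmin n u ((fun q => aeval (nxt n u F) q)^[i] p) = rr n u ^ i * dmin n u p := by
  induction i with
  | zero => simpa using hp
  | succ k ih =>
    rw [Function.iterate_succ_apply']
    obtain ⟨h1, h2⟩ := ih
    obtain ⟨h3, h4⟩ := dmin_tau hinj hu h1
    refine ⟨h3, ?_⟩
    rw [h4, h2]
    ring

lemma sigma_iter (σ : KK n F →ₐ[F] KK n F) (hσ : IsStar n u σ)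
    (p q : MvPolynomial (Fin n) F) (i : ℕ) :
    (⇑σ)^[i] (toKK p / toKK q) =
      toKK ((fun q => aeval (nxt n u F) q)^[i] p) / toKK ((fun q => aeval (nxt n u F) q)^[i] q) := by
  induction i generalizing p q with
  | zero => simp
  | succ k ih =>
    rw [Function.iterate_succ_apply, Function.iterate_succ_apply, Function.iterate_succ_apply]
    rw [map_div₀ σ, sigma_toKK σ hσ p, sigma_toKK σ hσ q]
    exact ih _ _

end Aux

open Aux in
set_option maxHeartbeats 1000000 in
theorem dmin_pcomp {F : Type*} [Field F] (n u : ℕ) (hn : 0 < n) (hu : 0 < u)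
    (hirr : Irreducible ((Polynomial.X : Polynomial ℚ) ^ n - Polynomial.C (u : ℚ)))
    (σ : KK n F →ₐ[F] KK n F) (hσ : IsStar n u σ)
    (f : MvPolynomial (Fin n) F) (hf : f ≠ 0)
    (g1 g2 : MvPolynomial (Fin n) F) (hg1 : g1 ≠ 0) (hg2 : g2 ≠ 0)
    (hgc : toKK g1 / toKK g2 ∉ Set.range (algebraMap F (KK n F)))
    (hneg : dmin n u g1 - dmin n u g2 < 0)
    (h1 h2 : MvPolynomial (Fin n) F) (hh2 : h2 ≠ 0)
    (hrep : pcomp n σ (toKK f) (toKK g1 / toKK g2) = toKK h1 / toKK h2) :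
    dmin n u h1 - dmin n u h2 = dmax n u f * (dmin n u g1 - dmin n u g2) := by
  have hinj : Function.Injective (wdeg n u) := wdeg_injective hn hu hirr
  set D : ℝ := dmin n u g1 - dmin n u g2 with hD
  set pts : Fin n → KK n F := fun i : Fin n => (⇑σ)^[(i : ℕ)] (toKK g1 / toKK g2) with hptsdef
  set t : Fin n → ℝ := fun i => -(rr n u ^ (i : ℕ) * D) with htdef
  have hptsv : ∀ i : Fin n, vK n u F hinj (pts i) =
      ((Multiplicative.ofAdd (t i) : Multiplicative ℝ) : Γr) := by
    intro i
    rw [hptsdef]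
    simp only []
    rw [sigma_iter σ hσ g1 g2 (i : ℕ)]
    obtain ⟨ha, hda⟩ := iter_facts (F := F) hinj hu hg1 (i : ℕ)
    obtain ⟨hb, hdb⟩ := iter_facts (F := F) hinj hu hg2 (i : ℕ)
    rw [map_div₀, vK_toKK' hinj ha, vK_toKK' hinj hb, ← WithZero.coe_div, ← ofAdd_sub]
    rw [htdef, hda, hdb]
    congr 2
    rw [hD]
    ring
  have hsum : ∀ e : Fin n →₀ ℕ, (∑ i : Fin n, (e i : ℝ) * t i) = wdeg n u e * (-D) := by
    intro e
    rw [wdeg_eq_sum_rr hu, Finset.sum_mul]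
    apply Finset.sum_congr rfl
    intro i _
    rw [htdef]
    ring
  have hD0 : D < 0 := hneg
  have ht : Function.Injective fun e : Fin n →₀ ℕ => ∑ i : Fin n, (e i : ℝ) * t i := by
    intro a b hab
    simp only [hsum] at hab
    exact hinj (mul_right_cancel₀ (by linarith) hab)
  have hring : Function.Injective
      ((MvPolynomial.aeval (R := F) (fun i : Fin n => (⇑σ)^[(i : ℕ)] (toKK g1 / toKK g2))).toRingHom :
        MvPolynomial (Fin n) F →+* KK n F) := by
    rw [injective_iff_map_eq_zero]
    intro p hp0
    by_contra hp
    have hv := vK_aeval hinj pts t hptsv ht hp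
    have hz : aeval pts p = 0 := hp0
    rw [hz, map_zero] at hv
    exact WithZero.zero_ne_coe hv
  rw [pcomp, dif_pos hring] at hrep
  have hrep3 : aeval pts f = toKK h1 / toKK h2 := by
    rw [← hrep]
    exact (IsFractionRing.lift_algebraMap hring f).symm
  have hLv := vK_aeval hinj pts t hptsv ht hf
  obtain ⟨b, hbm, hbv⟩ := exists_dmax (u := u) hf
  have hsup : (f.support.sup' (support_nonempty.mpr hf)
      (fun e => ∑ i : Fin n, (e i : ℝ) * t i)) = dmax n u f * (-D) := by
    rw [sup'_eq_of_mem _ _ hbm]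
    · rw [hsum, hbv]
    · intro e he
      rw [hsum, hsum]
      have hle : wdeg n u e ≤ wdeg n u b := hbv ▸ le_dmax he
      nlinarith
  rw [hsup, hrep3] at hLv
  have hh1 : h1 ≠ 0 := by
    intro h0
    rw [h0] at hLv
    simp only [map_zero, zero_div] at hLv
    exact WithZero.zero_ne_coe hLv
  rw [map_div₀, vK_toKK' hinj hh1, vK_toKK' hinj hh2, ← WithZero.coe_div, ← ofAdd_sub] at hLv
  have := Multiplicative.ofAdd.injective (WithZero.coe_inj.mp hLv)
  have hfin : -dmin n u h1 - -dmin n u h2 = dmax n u f * (-D) := this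
  rw [hD] at hfin ⊢
  linarith


end
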